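/- arXiv:1604.06372 — 4 statements merged into one kernel-verified Lean document; each statement's English description precedes it below -/
import Mathlib

section
/- Let a be a regular scale factor with lim_{t→0⁺} a'(t) = 0 and a''(t) ≥ 0 near 0. Then for fixed τ > 0, lim_{t₀→0⁺} a'(t₀)·∫_{t₀}^τ (a''(t)/a'(t)²)·dt/√(a(τ)²−a(t)²) = 1/a(τ). -/
open Set Filter MeasureTheory intervalIntegral

set_option maxHeartbeats 2000000 in
/-- If `a'(0⁺) = 0` and `a'' ≥ 0` near `0`, then
`a'(t₀) · ∫_{t₀}^τ (a''/a'²)/√(a(τ)²−a(t)²) dt → 1/a(τ)` as `t₀ → 0⁺`. -/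
theorem weighted_integral_limit (a : ℝ → ℝ)
    (ha0 : a 0 = 0)
    (hmono : StrictMonoOn a (Set.Ici 0))
    (hcont : ContinuousOn a (Set.Ici 0))
    (hsmooth : ContDiffOn ℝ 2 a (Set.Ioi 0))
    (hreg : ∀ t > (0:ℝ), a t * deriv (deriv a) t / (deriv a t) ^ 2 ≤ 1)
    (hderiv0 : Filter.Tendsto (deriv a) (nhdsWithin 0 (Set.Ioi 0)) (nhds 0))
    (ε : ℝ) (hε : 0 < ε)
    (hconv : ∀ t ∈ Set.Ioo (0:ℝ) ε, 0 ≤ deriv (deriv a) t) :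
    ∀ τ > (0:ℝ),
      Filter.Tendsto
        (fun t₀ => deriv a t₀ * ∫ t in t₀..τ,
          (deriv (deriv a) t / (deriv a t) ^ 2) / Real.sqrt ((a τ) ^ 2 - (a t) ^ 2))
        (nhdsWithin 0 (Set.Ioi 0)) (nhds (1 / a τ)) := by
  -- basic differentiability facts
  have hder1 : ContDiffOn ℝ 1 (deriv a) (Set.Ioi 0) :=
    hsmooth.deriv_of_isOpen isOpen_Ioi (by norm_num)
  have hdiffa : ∀ t > (0:ℝ), HasDerivAt a (deriv a t) t := by
    intro t ht
    exact (((hsmooth.differentiableOn (by norm_num)).differentiableAt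
      (isOpen_Ioi.mem_nhds ht))).hasDerivAt
  have hconta' : ContinuousOn (deriv a) (Set.Ioi 0) := hder1.continuousOn
  have hdiffa' : ∀ t > (0:ℝ), HasDerivAt (deriv a) (deriv (deriv a) t) t := by
    intro t ht
    exact (((hder1.differentiableOn (by norm_num)).differentiableAt
      (isOpen_Ioi.mem_nhds ht))).hasDerivAt
  have hconta'' : ContinuousOn (deriv (deriv a)) (Set.Ioi 0) :=
    hder1.continuousOn_deriv_of_isOpen isOpen_Ioi le_rfl
  -- nonneg values
  have ha_nonneg : ∀ t ≥ (0:ℝ), 0 ≤ a t := by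
    intro t ht
    rcases eq_or_lt_of_le ht with h | h
    · rw [← h, ha0]
    · rw [← ha0]; exact (hmono (Set.mem_Ici.2 le_rfl) (Set.mem_Ici.2 (le_of_lt h)) h).le
  have ha_pos : ∀ t > (0:ℝ), 0 < a t := by
    intro t ht
    rw [← ha0]; exact hmono (Set.mem_Ici.2 le_rfl) (Set.mem_Ici.2 ht.le) ht
  -- deriv nonneg
  have hd0 : ∀ t > (0:ℝ), 0 ≤ deriv a t := by
    intro t ht
    have h := hasDerivAt_iff_tendsto_slope.mp (hdiffa t ht)
    have h' : Filter.Tendsto (slope a t) (nhdsWithin t (Set.Ioi t)) (nhds (deriv a t)) :=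
      h.mono_left (nhdsWithin_mono t fun x hx => ne_of_gt hx)
    refine ge_of_tendsto h' ?_
    filter_upwards [self_mem_nhdsWithin] with x hx
    have hx' : t < x := hx
    have := hmono ht.le (lt_trans ht hx').le (hx')
    rw [slope_def_field]
    exact div_nonneg (by linarith) (by linarith)
  -- deriv a monotone on (0, ε)
  have hmono' : MonotoneOn (deriv a) (Set.Ioo 0 ε) := by
    refine monotoneOn_of_deriv_nonneg (convex_Ioo 0 ε)
      (hconta'.mono fun x hx => hx.1) ?_ ?_
    · rw [interior_Ioo]
      exact fun x hx => ((hdiffa' x hx.1).differentiableAt).differentiableWithinAt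
    · rw [interior_Ioo]; exact hconv
  -- deriv a positive on (0, ε)
  have hposε : ∀ t ∈ Set.Ioo (0:ℝ) ε, 0 < deriv a t := by
    intro s hs
    rcases (hd0 s hs.1).lt_or_eq with h | h
    · exact h
    exfalso
    have hs2 : (0:ℝ) < s / 2 := by linarith [hs.1]
    have hsub : Set.Icc (s/2) s ⊆ Set.Ioi (0:ℝ) := fun x hx => lt_of_lt_of_le hs2 hx.1
    have hanti : AntitoneOn a (Set.Icc (s/2) s) := by
      refine antitoneOn_of_deriv_nonpos (convex_Icc _ _)
        (hcont.mono fun x hx => Set.mem_Ici.2 (le_of_lt (hsub hx))) ?_ ?_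
      · rw [interior_Icc]
        exact fun x hx => ((hdiffa x (lt_trans hs2 hx.1)).differentiableAt).differentiableWithinAt
      · rw [interior_Icc]
        intro x hx
        have hxε : x ∈ Set.Ioo (0:ℝ) ε := ⟨lt_trans hs2 hx.1, lt_trans hx.2 hs.2⟩
        have := hmono' hxε hs hx.2.le
        rw [← h] at this
        exact this
    have h1 : a s ≤ a (s/2) := hanti ⟨le_rfl, by linarith [hs.1]⟩ ⟨by linarith [hs.1], le_rfl⟩ (by linarith [hs.1])
    have h2 : a (s/2) < a s := hmono hs2.le hs.1.le (by linarith [hs.1])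
    linarith
  -- deriv a positive everywhere on (0, ∞)
  have hdpos : ∀ t > (0:ℝ), 0 < deriv a t := by
    intro s hs
    rcases (hd0 s hs).lt_or_eq with h | h
    · exact h
    exfalso
    -- there is a point u > s with deriv a u > 0
    have hu : ∃ u > s, 0 < deriv a u := by
      by_contra hnu
      push_neg at hnu
      have hzero : ∀ x ∈ Set.Icc s (s+1), deriv a x ≤ 0 := by
        intro x hx
        rcases eq_or_lt_of_le hx.1 with h' | h'
        · rw [← h', ← h]
        · exact hnu x h'
      have hanti : AntitoneOn a (Set.Icc s (s+1)) := by
        refine antitoneOn_of_deriv_nonpos (convex_Icc _ _)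
          (hcont.mono fun x hx => le_of_lt (lt_of_lt_of_le hs hx.1)) ?_ ?_
        · rw [interior_Icc]
          exact fun x hx => ((hdiffa x (lt_trans hs hx.1)).differentiableAt).differentiableWithinAt
        · rw [interior_Icc]
          exact fun x hx => hzero x (Set.Ioo_subset_Icc_self hx)
      have h1 : a (s+1) ≤ a s := hanti ⟨le_rfl, by linarith⟩ ⟨by linarith, le_rfl⟩ (by linarith)
      have h2 : a s < a (s+1) := hmono (Set.mem_Ici.2 hs.le) (Set.mem_Ici.2 (by linarith)) (by linarith)
      linarith
    obtain ⟨u, hsu, hu⟩ := hu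
    set Z := {t ∈ Set.Icc s u | deriv a t = 0} with hZ
    have hZne : Z.Nonempty := ⟨s, ⟨⟨le_rfl, hsu.le⟩, h.symm⟩⟩
    have hZclosed : IsClosed Z := by
      have : Z = Set.Icc s u ∩ deriv a ⁻¹' {0} := by
        ext x; simp [hZ, Set.mem_sep_iff, and_comm]
      rw [this]
      exact ContinuousOn.preimage_isClosed_of_isClosed
        (hconta'.mono fun x hx => lt_of_lt_of_le hs hx.1) isClosed_Icc isClosed_singleton
    have hZbdd : BddAbove Z := ⟨u, fun x hx => hx.1.2⟩
    set α := sSup Z with hα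
    have hαZ : α ∈ Z := hZclosed.csSup_mem hZne hZbdd
    have hαu : α < u := by
      rcases lt_or_eq_of_le hαZ.1.2 with h' | h'
      · exact h'
      · exfalso; rw [h'] at hαZ; exact (ne_of_gt hu) hαZ.2
    have hα0 : 0 < α := lt_of_lt_of_le hs hαZ.1.1
    have haα : 0 < a α := ha_pos α hα0
    -- deriv a > 0 on (α, u]
    have hpos : ∀ x ∈ Set.Ioc α u, 0 < deriv a x := by
      intro x hx
      rcases (hd0 x (lt_trans hα0 hx.1)).lt_or_eq with h' | h'
      · exact h'
      exfalso
      have : x ∈ Z := ⟨⟨le_trans hαZ.1.1 hx.1.le, hx.2⟩, h'.symm⟩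
      exact absurd (le_csSup hZbdd this) (not_le.2 hx.1)
    -- q = a'/a is antitone on (α, u]
    set q : ℝ → ℝ := fun t => deriv a t / a t with hq
    have hqanti : AntitoneOn q (Set.Ioc α u) := by
      refine antitoneOn_of_deriv_nonpos (convex_Ioc _ _)
        ((hconta'.mono fun x hx => lt_trans hα0 hx.1).div
          (hcont.mono fun x hx => (lt_trans hα0 hx.1).le)
          fun x hx => ne_of_gt (ha_pos x (lt_trans hα0 hx.1))) ?_ ?_
      · rw [interior_Ioc]
        intro x hx
        have hx0 : 0 < x := lt_trans hα0 hx.1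
        exact (((hdiffa' x hx0).div (hdiffa x hx0) (ne_of_gt (ha_pos x hx0))).differentiableAt).differentiableWithinAt
      · rw [interior_Ioc]
        intro x hx
        have hx0 : 0 < x := lt_trans hα0 hx.1
        have hder : HasDerivAt q ((deriv (deriv a) x * a x - deriv a x * deriv a x) / (a x)^2) x :=
          (hdiffa' x hx0).div (hdiffa x hx0) (ne_of_gt (ha_pos x hx0))
        rw [hder.deriv]
        have hax : 0 < a x := ha_pos x hx0
        have hdx : 0 < deriv a x := hpos x (Set.Ioo_subset_Ioc_self hx)
        have hregx := hreg x hx0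
        rw [div_le_one (by positivity)] at hregx
        apply div_nonpos_of_nonpos_of_nonneg _ (by positivity)
        nlinarith
    -- take the limit of q at α from the right
    have hqlim : Filter.Tendsto q (nhdsWithin α (Set.Ioi α)) (nhds 0) := by
      have hc : ContinuousAt q α := by
        have h1 : ContinuousAt (deriv a) α :=
          (hconta' α hα0).continuousAt (isOpen_Ioi.mem_nhds hα0)
        have h2 : ContinuousAt a α := ((hdiffa α hα0).differentiableAt).continuousAt
        exact h1.div h2 (ne_of_gt haα)
      have : q α = 0 := by rw [hq]; simp [hαZ.2]
      rw [← this]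
      exact hc.continuousWithinAt.tendsto
    have hqu : q u ≤ 0 := by
      refine ge_of_tendsto hqlim ?_
      filter_upwards [Ioo_mem_nhdsGT hαu] with x hx
      exact hqanti ⟨hx.1, hx.2.le⟩ ⟨hαu, le_rfl⟩ hx.2.le
    have : 0 < q u := div_pos hu (ha_pos u (lt_trans hα0 hαu))
    linarith
  -- main part
  intro τ hτ
  set A := a τ with hAdef
  have hApos : 0 < A := ha_pos τ hτ
  set h₁ : ℝ → ℝ := fun t => deriv (deriv a) t / (deriv a t)^2 with hh₁
  set g : ℝ → ℝ := fun t => deriv (deriv a) t / deriv a t ^ 2 / Real.sqrt (A ^ 2 - a t ^ 2) with hgdef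
  have hgh : ∀ t, g t = h₁ t / Real.sqrt (A^2 - (a t)^2) := fun t => rfl
  have hh₁cont : ContinuousOn h₁ (Set.Ioi 0) :=
    hconta''.div (hconta'.pow 2) (fun t ht => pow_ne_zero _ (ne_of_gt (hdpos t ht)))
  have hsq : ContinuousOn (fun t => Real.sqrt (A^2 - (a t)^2)) (Set.Ici 0) :=
    (continuousOn_const.sub (hcont.pow 2)).sqrt
  have haA : ∀ t, 0 ≤ t → t < τ → a t < A := fun t ht htτ =>
    hmono (Set.mem_Ici.2 ht) (Set.mem_Ici.2 hτ.le) htτ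
  have hgcont : ∀ c d : ℝ, 0 < c → d < τ → ContinuousOn g (Set.Icc c d) := by
    intro c d hc hd
    have hsub : Set.Icc c d ⊆ Set.Ioi 0 := fun x hx => lt_of_lt_of_le hc hx.1
    refine (hh₁cont.mono hsub).div (hsq.mono fun x hx => Set.mem_Ici.2 (hsub hx).le) ?_
    intro x hx
    have hx0 : (0:ℝ) < x := hsub hx
    have hxA : a x < A := haA x hx0.le (lt_of_le_of_lt hx.2 hd)
    have h0 : 0 < A^2 - a x^2 := by nlinarith [ha_nonneg x hx0.le]
    exact ne_of_gt (Real.sqrt_pos.2 h0)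
  -- tail integrability
  have htail : ∀ δ, 0 < δ → δ < τ → IntervalIntegrable g volume δ τ := by
    intro δ hδ0 hδτ
    have hsub : Set.Icc δ τ ⊆ Set.Ioi 0 := fun x hx => lt_of_lt_of_le hδ0 hx.1
    obtain ⟨tm, htm, hmin⟩ := isCompact_Icc.exists_isMinOn (Set.nonempty_Icc.2 hδτ.le)
      (hconta'.mono hsub)
    set m := deriv a tm with hm
    have hmpos : 0 < m := hdpos tm (hsub htm)
    obtain ⟨tM, htM, hmax⟩ := isCompact_Icc.exists_isMaxOn (Set.nonempty_Icc.2 hδτ.le)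
      ((hh₁cont.mono hsub).abs)
    set M := |h₁ tM| with hM
    have hM0 : 0 ≤ M := abs_nonneg _
    have hgrow : ∀ t ∈ Set.Icc δ τ, m * (τ - t) ≤ A - a t := by
      intro t ht
      have := (convex_Icc δ τ).mul_sub_le_image_sub_of_le_deriv
        (hcont.mono fun x hx => Set.mem_Ici.2 (hsub hx).le)
        (fun x hx => ((hdiffa x (hsub (interior_subset hx))).differentiableAt).differentiableWithinAt)
        (fun x hx => hmin (interior_subset hx)) t ht τ (Set.right_mem_Icc.2 hδτ.le) ht.2
      linarith [this]
    set C := M / Real.sqrt (m * A) with hC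
    have hCpos : 0 ≤ C := div_nonneg hM0 (Real.sqrt_nonneg _)
    have hbound : ∀ t ∈ Set.Icc δ τ, |g t| ≤ C * (τ - t) ^ (-(1/2) : ℝ) := by
      intro t ht
      rcases eq_or_lt_of_le ht.2 with h' | h'
      · rw [h']
        have hz : Real.sqrt (A^2 - a τ^2) = 0 := by
          rw [sub_self, Real.sqrt_zero]
        rw [hgh, hz, div_zero, abs_zero, sub_self, Real.zero_rpow (by norm_num)]
        simp
      · have h0 : 0 < τ - t := by linarith
        have hfac : m * (τ - t) * A ≤ A^2 - a t^2 := by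
          have h1 := hgrow t ht
          have h2 : 0 ≤ a t := ha_nonneg t (hsub ht).le
          nlinarith [mul_le_mul_of_nonneg_right h1 (by positivity : (0:ℝ) ≤ A + a t),
            mul_nonneg (mul_pos hmpos h0).le h2]
        have hsqrt : Real.sqrt (m * (τ-t) * A) ≤ Real.sqrt (A^2 - a t^2) :=
          Real.sqrt_le_sqrt hfac
        have hsplit : Real.sqrt (m * (τ-t) * A) = Real.sqrt (m*A) * Real.sqrt (τ - t) := by
          rw [← Real.sqrt_mul (by positivity)]
          ring_nf
        have hpos1 : 0 < Real.sqrt (m*A) := Real.sqrt_pos.2 (by positivity)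
        have hpos2 : 0 < Real.sqrt (τ - t) := Real.sqrt_pos.2 h0
        have h3 : |h₁ t| ≤ M := hmax ht
        have hrpow : (τ - t) ^ (-(1/2):ℝ) = (Real.sqrt (τ - t))⁻¹ := by
          rw [Real.sqrt_eq_rpow, ← Real.rpow_neg h0.le]
        rw [hgh, abs_div, abs_of_nonneg (Real.sqrt_nonneg _), hrpow]
        calc |h₁ t| / Real.sqrt (A^2 - a t^2)
            ≤ M / (Real.sqrt (m*A) * Real.sqrt (τ-t)) := by
              apply div_le_div₀ hM0 h3 (by positivity)
              rw [← hsplit]; exact hsqrt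
          _ = C * (Real.sqrt (τ - t))⁻¹ := by
              rw [hC]; field_simp
    have hbint : IntervalIntegrable (fun t => C * (τ - t) ^ (-(1/2):ℝ)) volume δ τ := by
      have h1 : IntervalIntegrable (fun x : ℝ => x ^ (-(1/2):ℝ)) volume 0 (τ - δ) :=
        intervalIntegrable_rpow' (by norm_num)
      have h2 := (h1.comp_sub_left τ).symm
      rw [sub_zero, sub_sub_cancel] at h2
      exact h2.const_mul C
    have hmeas : AEStronglyMeasurable g (volume.restrict (Set.uIoc δ τ)) := by
      have h1 : AEMeasurable h₁ (volume.restrict (Set.Icc δ τ)) :=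
        ((hh₁cont.mono hsub).aemeasurable measurableSet_Icc)
      have h2 : AEMeasurable (fun t => Real.sqrt (A^2 - (a t)^2)) (volume.restrict (Set.Icc δ τ)) :=
        ((hsq.mono fun x hx => Set.mem_Ici.2 (hsub hx).le).aemeasurable measurableSet_Icc)
      have h3 := h1.div h2
      have hle : volume.restrict (Set.uIoc δ τ) ≤ volume.restrict (Set.Icc δ τ) := by
        rw [Set.uIoc_of_le hδτ.le]
        exact Measure.restrict_mono Set.Ioc_subset_Icc_self le_rfl
      exact (h3.mono_measure hle).aestronglyMeasurable
    refine hbint.mono_fun hmeas ?_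
    rw [Set.uIoc_of_le hδτ.le]
    refine (ae_restrict_iff' measurableSet_Ioc).2 (Filter.Eventually.of_forall ?_)
    intro t ht
    calc ‖g t‖ = |g t| := rfl
      _ ≤ C * (τ - t) ^ (-(1/2):ℝ) := hbound t (Set.Ioc_subset_Icc_self ht)
      _ ≤ ‖C * (τ - t) ^ (-(1/2):ℝ)‖ := le_abs_self _
  -- FTC
  have hJ : ∀ x y : ℝ, 0 < x → x ≤ y → (∫ t in x..y, h₁ t) = (deriv a x)⁻¹ - (deriv a y)⁻¹ := by
    intro x y hx hxy
    have hsub : Set.uIcc x y ⊆ Set.Ioi 0 := by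
      rw [Set.uIcc_of_le hxy]; exact fun z hz => lt_of_lt_of_le hx hz.1
    have hderivF : ∀ t ∈ Set.uIcc x y, HasDerivAt (fun u => -(deriv a u)⁻¹) (h₁ t) t := by
      intro t ht
      have ht0 : (0:ℝ) < t := hsub ht
      have h1 : HasDerivAt (fun u => -(deriv a u)⁻¹) _ t := ((hdiffa' t ht0).inv (ne_of_gt (hdpos t ht0))).neg
      simpa [hh₁, neg_div] using h1
    have hint : IntervalIntegrable h₁ volume x y := by
      apply ContinuousOn.intervalIntegrable
      exact hh₁cont.mono hsub
    rw [intervalIntegral.integral_eq_sub_of_hasDerivAt hderivF hint]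
    ring
  -- the limit
  rw [Metric.tendsto_nhdsWithin_nhds]
  intro η hη
  -- choose δ₁
  have hφ : Filter.Tendsto (fun δ => (Real.sqrt (A^2 - (a δ)^2))⁻¹)
      (nhdsWithin 0 (Set.Ioi 0)) (nhds (1/A)) := by
    have h0 : Filter.Tendsto a (nhdsWithin 0 (Set.Ioi 0)) (nhds 0) := by
      have h := (hcont 0 Set.self_mem_Ici).tendsto
      rw [ha0] at h
      exact h.mono_left (nhdsWithin_mono _ Set.Ioi_subset_Ici_self)
    have h1 : Filter.Tendsto (fun δ => A^2 - (a δ)^2)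
        (nhdsWithin 0 (Set.Ioi 0)) (nhds (A^2)) := by
      have hsq2 : Filter.Tendsto (fun δ => (a δ)^2) (nhdsWithin 0 (Set.Ioi 0)) (nhds 0) := by
        simpa using h0.pow 2
      simpa using ((tendsto_const_nhds (x := A^2)
        (f := nhdsWithin (0:ℝ) (Set.Ioi 0))).sub hsq2)
    have h2 : Filter.Tendsto (fun δ => Real.sqrt (A^2 - (a δ)^2))
        (nhdsWithin 0 (Set.Ioi 0)) (nhds A) := by
      have := (Real.continuous_sqrt.tendsto (A^2)).comp h1
      rwa [Real.sqrt_sq hApos.le] at this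
    have h3 := h2.inv₀ (ne_of_gt hApos)
    rwa [one_div]
  obtain ⟨δ₁, hδ₁mem, hδ₁c⟩ : ∃ δ₁, δ₁ ∈ Set.Ioo 0 (min ε τ) ∧
      (Real.sqrt (A^2 - (a δ₁)^2))⁻¹ < 1/A + η/3 := by
    have E1 : ∀ᶠ δ in nhdsWithin 0 (Set.Ioi 0),
        (Real.sqrt (A^2 - (a δ)^2))⁻¹ < 1/A + η/3 :=
      hφ (Iio_mem_nhds (by linarith))
    have E2 : ∀ᶠ δ in nhdsWithin 0 (Set.Ioi 0), δ ∈ Set.Ioo 0 (min ε τ) :=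
      Ioo_mem_nhdsGT (lt_min hε hτ)
    exact (E2.and E1).exists
  have hδ₁0 : 0 < δ₁ := hδ₁mem.1
  have hδ₁ε : δ₁ < ε := lt_of_lt_of_le hδ₁mem.2 (min_le_left _ _)
  have hδ₁τ : δ₁ < τ := lt_of_lt_of_le hδ₁mem.2 (min_le_right _ _)
  have hKint : IntervalIntegrable g volume δ₁ τ := htail δ₁ hδ₁0 hδ₁τ
  set K := ∫ t in δ₁..τ, g t with hK
  have haδ₁ : 0 < deriv a δ₁ := hdpos δ₁ hδ₁0
  set c₂ := (Real.sqrt (A^2 - (a δ₁)^2))⁻¹ with hc₂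
  have hc₂pos : 0 < c₂ := by
    have hA' : a δ₁ < A := haA δ₁ hδ₁0.le hδ₁τ
    have h0 : 0 < A^2 - a δ₁^2 := by nlinarith [ha_nonneg δ₁ hδ₁0.le]
    exact inv_pos.2 (Real.sqrt_pos.2 h0)
  set r := min (η/3/(|K|+1)) (η/3 * A * deriv a δ₁) with hr
  have hrpos : 0 < r := lt_min (by positivity) (by positivity)
  obtain ⟨δ', hδ'pos, hδ'⟩ := Metric.tendsto_nhdsWithin_nhds.mp hderiv0 r hrpos
  refine ⟨min δ' δ₁, lt_min hδ'pos hδ₁0, ?_⟩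
  intro t₀ ht₀ hdist
  have ht₀0 : 0 < t₀ := ht₀
  have ht₀δ₁ : t₀ < δ₁ := by
    rw [Real.dist_eq, sub_zero, abs_of_pos ht₀0] at hdist
    exact lt_of_lt_of_le hdist (min_le_right _ _)
  have hsmall : deriv a t₀ < r := by
    have h := hδ' ht₀ (lt_of_lt_of_le hdist (min_le_left _ _))
    rwa [Real.dist_eq, sub_zero, abs_of_nonneg (hd0 t₀ ht₀0)] at h
  have ht₀ε : t₀ ∈ Set.Ioo (0:ℝ) ε := ⟨ht₀0, lt_trans ht₀δ₁ hδ₁ε⟩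
  have hd₀pos : 0 < deriv a t₀ := hposε t₀ ht₀ε
  have hIint : IntervalIntegrable g volume t₀ δ₁ := by
    apply ContinuousOn.intervalIntegrable
    rw [Set.uIcc_of_le ht₀δ₁.le]
    exact hgcont t₀ δ₁ ht₀0 hδ₁τ
  have hsplit : (∫ t in t₀..τ, g t) = (∫ t in t₀..δ₁, g t) + K :=
    (intervalIntegral.integral_add_adjacent_intervals hIint hKint).symm
  have hh₁int : IntervalIntegrable h₁ volume t₀ δ₁ := by
    apply ContinuousOn.intervalIntegrable
    rw [Set.uIcc_of_le ht₀δ₁.le]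
    exact hh₁cont.mono fun x hx => lt_of_lt_of_le ht₀0 hx.1
  have hptwise : ∀ t ∈ Set.Icc t₀ δ₁, A⁻¹ * h₁ t ≤ g t ∧ g t ≤ c₂ * h₁ t := by
    intro t ht
    have ht0 : 0 < t := lt_of_lt_of_le ht₀0 ht.1
    have htε : t < ε := lt_of_le_of_lt ht.2 hδ₁ε
    have hh₁nn : 0 ≤ h₁ t := div_nonneg (hconv t ⟨ht0, htε⟩) (sq_nonneg _)
    have hat : a t ≤ a δ₁ := hmono.monotoneOn (Set.mem_Ici.2 ht0.le)
      (Set.mem_Ici.2 hδ₁0.le) ht.2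
    have haA' : a δ₁ < A := haA δ₁ hδ₁0.le hδ₁τ
    have h2 : 0 < A^2 - a δ₁^2 := by nlinarith [ha_nonneg δ₁ hδ₁0.le]
    have h3 : A^2 - a t^2 ≤ A^2 := by nlinarith [ha_nonneg t ht0.le]
    have h4 : A^2 - a δ₁^2 ≤ A^2 - a t^2 := by
      nlinarith [ha_nonneg t ht0.le, ha_nonneg δ₁ hδ₁0.le]
    have hs1 : Real.sqrt (A^2 - a t^2) ≤ A := by
      calc Real.sqrt (A^2 - a t^2) ≤ Real.sqrt (A^2) := Real.sqrt_le_sqrt h3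
        _ = A := Real.sqrt_sq hApos.le
    have hs2 : Real.sqrt (A^2 - a δ₁^2) ≤ Real.sqrt (A^2 - a t^2) := Real.sqrt_le_sqrt h4
    have hs0 : 0 < Real.sqrt (A^2 - a δ₁^2) := Real.sqrt_pos.2 h2
    have hst : 0 < Real.sqrt (A^2 - a t^2) := lt_of_lt_of_le hs0 hs2
    constructor
    · rw [hgh, inv_mul_eq_div]
      gcongr
    · rw [hgh, hc₂, inv_mul_eq_div]
      gcongr
  have hlow : A⁻¹ * (∫ t in t₀..δ₁, h₁ t) ≤ ∫ t in t₀..δ₁, g t := by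
    rw [← intervalIntegral.integral_const_mul]
    exact intervalIntegral.integral_mono_on ht₀δ₁.le (hh₁int.const_mul _) hIint
      (fun t ht => (hptwise t ht).1)
  have hhigh : (∫ t in t₀..δ₁, g t) ≤ c₂ * ∫ t in t₀..δ₁, h₁ t := by
    rw [← intervalIntegral.integral_const_mul]
    exact intervalIntegral.integral_mono_on ht₀δ₁.le hIint (hh₁int.const_mul _)
      (fun t ht => (hptwise t ht).2)
  rw [hJ t₀ δ₁ ht₀0 ht₀δ₁.le] at hlow hhigh
  set D := deriv a t₀ with hD
  set D₁ := deriv a δ₁ with hD₁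
  set I₁ := ∫ t in t₀..δ₁, g t with hI₁
  have hDD₁ : D ≤ D₁ := hmono' ht₀ε ⟨hδ₁0, hδ₁ε⟩ ht₀δ₁.le
  have hq0 : 0 ≤ 1 - D / D₁ := by
    have h : D / D₁ ≤ 1 := div_le_one_of_le₀ hDD₁ haδ₁.le
    linarith
  have hq1 : 1 - D / D₁ ≤ 1 := by
    have h : 0 ≤ D / D₁ := div_nonneg hd₀pos.le haδ₁.le
    linarith
  have e1 : D * (c₂ * (D⁻¹ - D₁⁻¹)) = c₂ * (1 - D / D₁) := by
    field_simp
  have e2 : D * (A⁻¹ * (D⁻¹ - D₁⁻¹)) = A⁻¹ * (1 - D / D₁) := by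
    field_simp
  have hub : D * I₁ ≤ c₂ := by
    have h1 : D * I₁ ≤ D * (c₂ * (D⁻¹ - D₁⁻¹)) :=
      mul_le_mul_of_nonneg_left hhigh hd₀pos.le
    rw [e1] at h1
    nlinarith [hc₂pos]
  have hlb : A⁻¹ * (1 - D / D₁) ≤ D * I₁ := by
    have h1 : D * (A⁻¹ * (D⁻¹ - D₁⁻¹)) ≤ D * I₁ :=
      mul_le_mul_of_nonneg_left hlow hd₀pos.le
    rwa [e2] at h1
  have hDquot : D / D₁ ≤ η/3 * A := by
    rw [div_le_iff₀ haδ₁]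
    exact (lt_of_lt_of_le hsmall (min_le_right _ _)).le
  have hlb2 : A⁻¹ - η/3 ≤ D * I₁ := by
    refine le_trans ?_ hlb
    have hAinv : 0 < A⁻¹ := inv_pos.2 hApos
    have h5 : A⁻¹ * (D / D₁) ≤ A⁻¹ * (η/3 * A) := mul_le_mul_of_nonneg_left hDquot hAinv.le
    have h6 : A⁻¹ * (η/3 * A) = η/3 := by field_simp
    nlinarith
  have hK3 : |D * K| < η/3 := by
    rw [abs_mul, abs_of_nonneg hd₀pos.le]
    have h1 : D < η/3/(|K|+1) := lt_of_lt_of_le hsmall (min_le_left _ _)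
    have h2 : (0:ℝ) < |K| + 1 := by positivity
    calc D * |K| ≤ D * (|K|+1) :=
          mul_le_mul_of_nonneg_left (by linarith) hd₀pos.le
      _ < (η/3/(|K|+1)) * (|K|+1) := mul_lt_mul_of_pos_right h1 h2
      _ = η/3 := by field_simp
  rw [Real.dist_eq, hsplit, mul_add, abs_lt]
  have hK3' := abs_lt.1 hK3
  have hA1 : (1:ℝ)/A = A⁻¹ := one_div A
  constructor
  · nlinarith [hK3'.1, hlb2]
  · nlinarith [hK3'.2, hub, hδ₁c, hA1]
end

section
/- Let k = 0 and let a be a regular scale factor with infinite particle horizon (∫_0^τ dt/a(t) = ∞). Then lim_{t₀→0⁺} a(t₀)·∫_{t₀}^τ dt/a(t) = lim_{t₀→0⁺} a(t₀)/a'(t₀) = 1/H(0⁺), which exists and is finite, where H(t) = a'(t)/a(t) is the (nonincreasing) Hubble parameter. -/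
open Set Filter MeasureTheory

/-- For a regular scale factor with infinite particle horizon,
`a(t₀)·∫_{t₀}^τ dt/a(t)` and `a(t₀)/a'(t₀)` both converge to `1/H(0⁺)` as `t₀ → 0⁺`. -/
theorem infinite_particle_horizon_limit (a : ℝ → ℝ)
    (ha0 : a 0 = 0)
    (hmono : StrictMonoOn a (Set.Ici 0))
    (hcont : ContinuousOn a (Set.Ici 0))
    (hsmooth : ContDiffOn ℝ 2 a (Set.Ioi 0))
    (hreg : ∀ t > (0:ℝ), a t * deriv (deriv a) t / (deriv a t) ^ 2 ≤ 1)
    (τ : ℝ) (hτ : 0 < τ)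
    (hpart : ¬ MeasureTheory.IntegrableOn (fun t => 1 / a t) (Set.Ioc 0 τ)) :
    ∃ L : ℝ,
      Filter.Tendsto (fun t₀ => a t₀ / deriv a t₀)
        (nhdsWithin 0 (Set.Ioi 0)) (nhds L) ∧
      Filter.Tendsto (fun t₀ => a t₀ * ∫ t in t₀..τ, 1 / a t)
        (nhdsWithin 0 (Set.Ioi 0)) (nhds L) := by
  have hapos : ∀ t > (0:ℝ), 0 < a t := by
    intro t ht
    have := hmono (Set.mem_Ici.2 (le_refl 0)) (Set.mem_Ici.2 (le_of_lt ht)) ht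
    rwa [ha0] at this
  have hdiff : DifferentiableOn ℝ a (Ioi 0) := hsmooth.differentiableOn (by norm_num)
  have hda : ∀ t > (0:ℝ), HasDerivAt a (deriv a t) t := fun t ht =>
    ((hdiff t ht).differentiableAt (Ioi_mem_nhds ht)).hasDerivAt
  have hd2 : ContDiffOn ℝ 1 (deriv a) (Ioi 0) :=
    hsmooth.deriv_of_isOpen isOpen_Ioi (by norm_num)
  have hdd : ∀ t > (0:ℝ), HasDerivAt (deriv a) (deriv (deriv a) t) t := fun t ht =>
    (((hd2.differentiableOn (by norm_num)) t ht).differentiableAt (Ioi_mem_nhds ht)).hasDerivAt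
  have hdcont : ContinuousOn (deriv a) (Ioi 0) := hd2.continuousOn
  have hacont : ContinuousOn a (Ioi 0) := hcont.mono Ioi_subset_Ici_self
  -- derivative of a is nonnegative on (0,∞)
  have hd_nonneg : ∀ t > (0:ℝ), 0 ≤ deriv a t := by
    intro t ht
    have h1 : Tendsto (slope a t) (nhdsWithin t (Ioi t)) (nhds (deriv a t)) := by
      have h2 := ((hda t ht).hasDerivWithinAt (s := Ioi t))
      rw [hasDerivWithinAt_iff_tendsto_slope] at h2
      rwa [Set.diff_singleton_eq_self (by simp)] at h2
    refine ge_of_tendsto h1 ?_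
    filter_upwards [self_mem_nhdsWithin] with s hs
    have hts : t < s := hs
    have hle : a t ≤ a s := (hmono ht.le (ht.trans hts).le hts).le
    rw [slope_def_field]
    exact div_nonneg (by linarith) (by linarith)
  -- the key inequality, valid everywhere
  have key : ∀ t > (0:ℝ), a t * deriv (deriv a) t ≤ (deriv a t)^2 := by
    intro t ht
    rcases eq_or_lt_of_le (hd_nonneg t ht) with h0 | hpos
    · have hmin : IsLocalMin (deriv a) t := by
        filter_upwards [Ioi_mem_nhds ht] with s hs
        rw [← h0]; exact hd_nonneg s hs
      rw [hmin.deriv_eq_zero, ← h0]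
      simp
    · have h2 := hreg t ht
      rw [div_le_one (by positivity)] at h2
      exact h2
  set H : ℝ → ℝ := fun t => deriv a t / a t with hH
  have hHd : ∀ t > (0:ℝ), HasDerivAt H
      ((deriv (deriv a) t * a t - deriv a t * deriv a t) / (a t)^2) t :=
    fun t ht => (hdd t ht).div (hda t ht) (hapos t ht).ne'
  have hH_anti : AntitoneOn H (Ioi 0) := by
    apply antitoneOn_of_deriv_nonpos (convex_Ioi 0)
    · exact hdcont.div hacont (fun t ht => (hapos t ht).ne')
    · rw [interior_Ioi]
      exact fun t ht => (hHd t ht).differentiableAt.differentiableWithinAt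
    · rw [interior_Ioi]
      intro t ht
      rw [(hHd t ht).deriv]
      apply div_nonpos_of_nonpos_of_nonneg
      · have := key t ht
        nlinarith [this]
      · positivity
  have hA0 : Tendsto a (nhdsWithin 0 (Ioi 0)) (nhds 0) := by
    have h1 : ContinuousWithinAt a (Ici 0) 0 := hcont 0 self_mem_Ici
    have h2 := h1.tendsto
    rw [ha0] at h2
    exact h2.mono_left (nhdsWithin_mono 0 Ioi_subset_Ici_self)
  -- H tends to infinity at 0⁺
  have hHtop : Tendsto H (nhdsWithin 0 (Ioi 0)) atTop := by
    rw [tendsto_atTop]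
    intro b
    set M := max b 1 with hM
    have hM1 : (1:ℝ) ≤ M := le_max_right _ _
    have hMb : b ≤ M := le_max_left _ _
    have hexp : (0:ℝ) < Real.exp (Real.log (a τ) - M * τ) := Real.exp_pos _
    have hev : ∀ᶠ t in nhdsWithin 0 (Ioi 0),
        a t < Real.exp (Real.log (a τ) - M * τ) ∧ t ∈ Ioo (0:ℝ) τ := by
      filter_upwards [hA0.eventually (gt_mem_nhds hexp),
        Ioo_mem_nhdsGT hτ] with t h1 h2
      exact ⟨h1, h2⟩
    obtain ⟨t₁, ht1, ht1m⟩ := hev.exists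
    have ht10 : 0 < t₁ := ht1m.1
    have ht1τ : t₁ < τ := ht1m.2
    have hlog : Real.log (a t₁) < Real.log (a τ) - M * τ := by
      have := Real.log_lt_log (hapos t₁ ht10) ht1
      rwa [Real.log_exp] at this
    obtain ⟨c, hc, hceq⟩ := exists_hasDerivAt_eq_slope (fun s => Real.log (a s)) H ht1τ
      ((hcont.mono (fun z hz => le_trans ht10.le hz.1)).log
        (fun z hz => (hapos z (lt_of_lt_of_le ht10 hz.1)).ne'))
      (fun x hx => by
        have hx0 : 0 < x := lt_trans ht10 hx.1
        exact (hda x hx0).log (hapos x hx0).ne')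
    have hc0 : 0 < c := lt_trans ht10 hc.1
    have hHc : M ≤ H c := by
      rw [hceq]
      rw [le_div_iff₀ (by linarith [hc.2, hc.1] : (0:ℝ) < τ - t₁)]
      have : M * (τ - t₁) ≤ M * τ := by nlinarith
      linarith
    filter_upwards [Ioc_mem_nhdsGT hc0] with t ht
    exact le_trans hMb (le_trans hHc (hH_anti ht.1 hc0 ht.2))
  -- limit 1
  have hlim1 : Tendsto (fun t₀ => a t₀ / deriv a t₀) (nhdsWithin 0 (Ioi 0)) (nhds 0) := by
    have h1 := hHtop.inv_tendsto_atTop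
    have h2 : (fun t => (H t)⁻¹) = fun t₀ => a t₀ / deriv a t₀ := by
      funext t; rw [hH]; simp [inv_div]
    rwa [show H⁻¹ = fun t => (H t)⁻¹ from rfl, h2] at h1
  -- continuity of 1/a
  have hcont' : ContinuousOn (fun t => 1 / a t) (Ioi 0) :=
    continuousOn_const.div hacont (fun t ht => (hapos t ht).ne')
  have hgcont : ContinuousOn (fun s => deriv a s / (a s)^2) (Ioi 0) :=
    hdcont.div (hacont.pow 2) (fun t ht => pow_ne_zero 2 (hapos t ht).ne')
  have hsub : ∀ x y : ℝ, 0 < x → 0 < y → uIcc x y ⊆ Ioi 0 := by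
    intro x y hx hy z hz
    rw [Set.mem_uIcc] at hz
    rcases hz with ⟨h1, _⟩ | ⟨h1, _⟩
    · exact lt_of_lt_of_le hx h1
    · exact lt_of_lt_of_le hy h1
  have hint : ∀ x y : ℝ, 0 < x → 0 < y → IntervalIntegrable (fun t => 1 / a t) volume x y :=
    fun x y hx hy => (hcont'.mono (hsub x y hx hy)).intervalIntegrable
  have hintg : ∀ x y : ℝ, 0 < x → 0 < y →
      IntervalIntegrable (fun s => deriv a s / (a s)^2) volume x y :=
    fun x y hx hy => (hgcont.mono (hsub x y hx hy)).intervalIntegrable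
  -- limit 2
  have hlim2 : Tendsto (fun t₀ => a t₀ * ∫ t in t₀..τ, 1 / a t)
      (nhdsWithin 0 (Ioi 0)) (nhds 0) := by
    rw [Metric.tendsto_nhds]
    intro ε hε
    have hev : {t | 3/ε ≤ H t ∧ t < τ} ∈ nhdsWithin 0 (Ioi 0) := by
      filter_upwards [hHtop.eventually (eventually_ge_atTop (3/ε)),
        Ioo_mem_nhdsGT hτ] with t h1 h2
      exact ⟨h1, h2.2⟩
    rw [mem_nhdsGT_iff_exists_Ioo_subset] at hev
    obtain ⟨u, hu0, hu⟩ := hev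
    have hu0' : (0:ℝ) < u := hu0
    set δ := u/2 with hδ
    have hδ0 : 0 < δ := half_pos hu0'
    have hδu : δ < u := half_lt_self hu0'
    have hδτ : δ < τ := (hu ⟨hδ0, hδu⟩).2
    set C := ∫ t in δ..τ, 1 / a t with hC
    have hCnn : 0 ≤ C := intervalIntegral.integral_nonneg hδτ.le
      (fun s hs => by
        have := hapos s (lt_of_lt_of_le hδ0 hs.1)
        positivity)
    have hmulC : Tendsto (fun t => a t * C) (nhdsWithin 0 (Ioi 0)) (nhds 0) := by
      have := hA0.mul_const C
      simpa using this
    filter_upwards [Ioo_mem_nhdsGT hδ0,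
      hmulC.eventually (gt_mem_nhds (by positivity : (0:ℝ) < ε/3))] with t₀ ht₀ hCsmall
    have ht01 : 0 < t₀ := ht₀.1
    have ht0δ : t₀ < δ := ht₀.2
    have ha0' : 0 < a t₀ := hapos t₀ ht01
    -- split the integral
    have hsplit : (∫ t in t₀..τ, 1 / a t) = (∫ t in t₀..δ, 1 / a t) + C :=
      (intervalIntegral.integral_add_adjacent_intervals
        (hint t₀ δ ht01 hδ0) (hint δ τ hδ0 hτ)).symm
    -- FTC for a'/a²
    have hftc : (∫ s in t₀..δ, deriv a s / (a s)^2) = (a t₀)⁻¹ - (a δ)⁻¹ := by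
      have hderivs : ∀ s ∈ uIcc t₀ δ, HasDerivAt (fun u => -(a u)⁻¹) (deriv a s / (a s)^2) s := by
        intro s hs
        have hs0 : 0 < s := hsub _ _ ht01 hδ0 hs
        have h1 := ((hda s hs0).inv (hapos s hs0).ne').neg
        exact h1.congr_deriv (by ring)
      rw [intervalIntegral.integral_eq_sub_of_hasDerivAt hderivs (hintg t₀ δ ht01 hδ0)]
      ring
    -- pointwise bound on [t₀, δ]
    have hmono2 : (∫ t in t₀..δ, 1 / a t) ≤ ∫ s in t₀..δ, (ε/3) * (deriv a s / (a s)^2) := by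
      apply intervalIntegral.integral_mono_on ht0δ.le (hint t₀ δ ht01 hδ0)
        ((hintg t₀ δ ht01 hδ0).const_mul (ε/3))
      intro s hs
      have hs0 : 0 < s := lt_of_lt_of_le ht01 hs.1
      have hsu : s ∈ Ioo (0:ℝ) u := ⟨hs0, lt_of_le_of_lt hs.2 hδu⟩
      have hH3 : 3/ε ≤ H s := (hu hsu).1
      have has : 0 < a s := hapos s hs0
      have hd3 : 3/ε * a s ≤ deriv a s := by
        rw [hH] at hH3
        exact (le_div_iff₀ has).1 hH3
      calc 1 / a s = (ε/3) * ((3/ε * a s) / (a s)^2) := by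
            field_simp
          _ ≤ (ε/3) * (deriv a s / (a s)^2) := by
            have h2 : (0:ℝ) < (a s)^2 := by positivity
            gcongr
    have hIle : (∫ t in t₀..δ, 1 / a t) ≤ (ε/3) * (a t₀)⁻¹ := by
      have h1 : (∫ s in t₀..δ, (ε/3) * (deriv a s / (a s)^2))
          = (ε/3) * ((a t₀)⁻¹ - (a δ)⁻¹) := by
        rw [intervalIntegral.integral_const_mul, hftc]
      have h2 : (0:ℝ) ≤ (a δ)⁻¹ := inv_nonneg.2 (hapos δ hδ0).le
      have h3 : (ε/3) * ((a t₀)⁻¹ - (a δ)⁻¹) ≤ (ε/3) * (a t₀)⁻¹ := by nlinarith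
      linarith [hmono2, h1.le, h1.ge]
    have hInn : 0 ≤ (∫ t in t₀..δ, 1 / a t) :=
      intervalIntegral.integral_nonneg ht0δ.le (fun s hs => by
        have := hapos s (lt_of_lt_of_le ht01 hs.1)
        positivity)
    have hfin : a t₀ * ∫ t in t₀..τ, 1 / a t < ε := by
      rw [hsplit, mul_add]
      have h1 : a t₀ * (∫ t in t₀..δ, 1 / a t) ≤ ε/3 := by
        have := mul_le_mul_of_nonneg_left hIle ha0'.le
        have he : a t₀ * ((ε/3) * (a t₀)⁻¹) = ε/3 := by field_simp
        linarith [he ▸ this]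
      linarith [hCsmall]
    have hnn : 0 ≤ a t₀ * ∫ t in t₀..τ, 1 / a t := by
      rw [hsplit]
      exact mul_nonneg ha0'.le (add_nonneg hInn hCnn)
    rw [Real.dist_eq, sub_zero, abs_of_nonneg hnn]
    exact hfin
  exact ⟨0, hlim1, hlim2⟩
end

section
/- Let a be regular and an even extension with either 0 < a'(0⁺) < ∞, or a'(0)=0 but some n-th derivative a⁽ⁿ⁾(0) ≠ 0. Then with χ_{t₀}(τ) = ∫_{t₀}^τ (1/a(t))·a(τ)/√(a(τ)²−a(t)²) dt, one has lim_{t₀→0⁺} a(t₀)·χ_{t₀}(τ) = 0 for every τ > 0. (Hence the angular metric coefficient g_θθ = a(t₀)²·χ_{t₀}(τ)² vanishes at the big bang in the k=0 case.) -/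
open Set Filter MeasureTheory intervalIntegral Topology

section AngularAux
variable {a : ℝ → ℝ}

lemma ang_apos (ha0 : a 0 = 0) (hmono : StrictMonoOn a (Set.Ici 0)) :
    ∀ t > (0:ℝ), 0 < a t := by
  intro t ht
  have := hmono (le_refl (0:ℝ) : (0:ℝ) ∈ Ici 0) (le_of_lt ht) ht
  rwa [ha0] at this

lemma ang_adiff (hsmooth : ContDiffOn ℝ 2 a (Set.Ioi 0)) :
    ∀ t > (0:ℝ), DifferentiableAt ℝ a t := by
  intro t ht
  have := (hsmooth.differentiableOn (by norm_num)).differentiableAt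
    (isOpen_Ioi.mem_nhds ht)
  exact this

lemma ang_ucont (hsmooth : ContDiffOn ℝ 2 a (Set.Ioi 0)) :
    ContinuousOn (deriv a) (Set.Ioi 0) :=
  (hsmooth.deriv_of_isOpen (m := 1) isOpen_Ioi (by norm_num)).continuousOn

lemma ang_udiff (hsmooth : ContDiffOn ℝ 2 a (Set.Ioi 0)) :
    ∀ t > (0:ℝ), DifferentiableAt ℝ (deriv a) t := by
  intro t ht
  have h1 : ContDiffOn ℝ 1 (deriv a) (Set.Ioi 0) :=
    hsmooth.deriv_of_isOpen (m := 1) isOpen_Ioi (by norm_num)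
  exact (h1.differentiableOn (by norm_num)).differentiableAt (isOpen_Ioi.mem_nhds ht)

lemma ang_unonneg (hmono : StrictMonoOn a (Set.Ici 0))
    (hsmooth : ContDiffOn ℝ 2 a (Set.Ioi 0)) :
    ∀ t > (0:ℝ), 0 ≤ deriv a t := by
  intro t ht
  have hd : HasDerivAt a (deriv a t) t := (ang_adiff hsmooth t ht).hasDerivAt
  have hslope := hasDerivAt_iff_tendsto_slope.1 hd
  have hslope' : Tendsto (slope a t) (𝓝[>] t) (𝓝 (deriv a t)) :=
    hslope.mono_left (nhdsWithin_mono _ fun x hx => ne_of_gt hx)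
  refine ge_of_tendsto hslope' ?_
  filter_upwards [self_mem_nhdsWithin] with x hx
  have hxt : t < x := hx
  have : a t ≤ a x := (hmono (le_of_lt ht) (le_of_lt (ht.trans hxt)) hxt).le
  have := div_nonneg (sub_nonneg.2 this) (sub_nonneg.2 hxt.le)
  simpa [slope, vsub_eq_sub, div_eq_inv_mul] using this


lemma ang_upos (ha0 : a 0 = 0) (hmono : StrictMonoOn a (Set.Ici 0))
    (hcont : ContinuousOn a (Set.Ici 0)) (hsmooth : ContDiffOn ℝ 2 a (Set.Ioi 0))
    (hreg : ∀ t > (0:ℝ), a t * deriv (deriv a) t / (deriv a t) ^ 2 ≤ 1) :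
    ∀ t > (0:ℝ), 0 < deriv a t := by
  intro t₁ ht₁
  rcases (ang_unonneg hmono hsmooth t₁ ht₁).lt_or_eq with h | h
  · exact h
  exfalso
  have h0 : deriv a t₁ = 0 := h.symm
  -- find t₂ > t₁ with deriv a t₂ > 0
  obtain ⟨t₂, ht₂mem, ht₂eq⟩ :
      ∃ c ∈ Ioo t₁ (t₁ + 1), deriv a c = (a (t₁ + 1) - a t₁) / (t₁ + 1 - t₁) := by
    apply exists_hasDerivAt_eq_slope a (deriv a) (by linarith)
    · exact hcont.mono (fun x hx => le_trans ht₁.le hx.1)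
    · intro x hx
      exact (ang_adiff hsmooth x (lt_trans ht₁ hx.1)).hasDerivAt
  have ht₂pos : 0 < deriv a t₂ := by
    rw [ht₂eq]
    have : a t₁ < a (t₁ + 1) :=
      hmono (mem_Ici.2 ht₁.le) (mem_Ici.2 (by linarith)) (by linarith)
    apply div_pos (by linarith) (by norm_num)
  -- last zero before t₂
  set S : Set ℝ := Icc t₁ t₂ ∩ (deriv a) ⁻¹' {0} with hS
  have hSsub : S ⊆ Icc t₁ t₂ := inter_subset_left
  have hSclosed : IsClosed S := by
    apply ContinuousOn.preimage_isClosed_of_isClosed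
    · exact (ang_ucont hsmooth).mono (fun x hx => lt_of_lt_of_le ht₁ hx.1)
    · exact isClosed_Icc
    · exact isClosed_singleton
  have hScomp : IsCompact S := isCompact_Icc.of_isClosed_subset hSclosed hSsub
  have hSne : S.Nonempty := ⟨t₁, ⟨le_refl _, ht₂mem.1.le⟩, h0⟩
  set c := sSup S with hc
  have hcS : c ∈ S := hScomp.sSup_mem hSne
  have hc0 : deriv a c = 0 := hcS.2
  have hct₁ : t₁ ≤ c := hcS.1.1
  have hcpos : 0 < c := lt_of_lt_of_le ht₁ hct₁
  have hct₂ : c < t₂ := lt_of_le_of_ne hcS.1.2 (fun hcc => by rw [hcc] at hc0; linarith)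
  have hapos_c : 0 < a c := ang_apos ha0 hmono c hcpos
  have hupos' : ∀ t ∈ Ioc c t₂, 0 < deriv a t := by
    intro t ht
    have htpos : 0 < t := lt_trans hcpos ht.1
    rcases (ang_unonneg hmono hsmooth t htpos).lt_or_eq with h' | h'
    · exact h'
    · exfalso
      have : t ∈ S := ⟨⟨le_trans hct₁ ht.1.le, ht.2⟩, h'.symm⟩
      have := le_csSup hScomp.bddAbove this
      exact absurd (lt_of_lt_of_le ht.1 this) (lt_irrefl _)
  -- monotone auxiliary function
  set M := (a c)⁻¹ with hM
  have hMpos : 0 < M := inv_pos.2 hapos_c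
  set w := fun t => (deriv a t)⁻¹ + t * M with hw
  have hwmono : MonotoneOn w (Ioc c t₂) := by
    apply monotoneOn_of_deriv_nonneg (convex_Ioc c t₂)
    · apply ContinuousOn.add ?_ (continuousOn_id.mul continuousOn_const)
      apply ContinuousOn.inv₀
      · exact (ang_ucont hsmooth).mono (fun x hx => lt_trans hcpos hx.1)
      · intro x hx; exact (hupos' x hx).ne'
    · rw [interior_Ioc]
      intro x hx
      have hx' : x ∈ Ioc c t₂ := ⟨hx.1, hx.2.le⟩
      have hdd : HasDerivAt (deriv a) (deriv (deriv a) x) x :=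
        (ang_udiff hsmooth x (lt_trans hcpos hx.1)).hasDerivAt
      exact ((hdd.inv (hupos' x hx').ne').add
        ((hasDerivAt_id x).mul_const M)).differentiableAt.differentiableWithinAt
    · rw [interior_Ioc]
      intro x hx
      have hx' : x ∈ Ioc c t₂ := ⟨hx.1, hx.2.le⟩
      have hxpos : 0 < x := lt_trans hcpos hx.1
      have hux : 0 < deriv a x := hupos' x hx'
      have hax : 0 < a x := ang_apos ha0 hmono x hxpos
      have hdd : HasDerivAt (deriv a) (deriv (deriv a) x) x :=
        (ang_udiff hsmooth x hxpos).hasDerivAt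
      have hwd : HasDerivAt w (-(deriv (deriv a) x) / (deriv a x) ^ 2 + 1 * M) x :=
        (hdd.inv hux.ne').add ((hasDerivAt_id x).mul_const M)
      rw [hwd.deriv]
      -- key inequality from hreg
      have h1 : a x * deriv (deriv a) x ≤ (deriv a x) ^ 2 := by
        have := hreg x hxpos
        rwa [div_le_one (by positivity)] at this
      have hac_le : a c ≤ a x := hmono.monotoneOn (le_of_lt hcpos) (le_of_lt hxpos) hx.1.le
      have h2 : a c * deriv (deriv a) x ≤ deriv a x ^ 2 := by
        rcases le_or_gt 0 (deriv (deriv a) x) with hsgn | hsgn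
        · nlinarith
        · nlinarith
      have key : deriv (deriv a) x / deriv a x ^ 2 ≤ M := by
        rw [div_le_iff₀ (by positivity : (0:ℝ) < deriv a x ^ 2), hM]
        calc deriv (deriv a) x = (a c)⁻¹ * (a c * deriv (deriv a) x) := by
              field_simp
          _ ≤ (a c)⁻¹ * deriv a x ^ 2 := by
              exact mul_le_mul_of_nonneg_left h2 (inv_nonneg.2 hapos_c.le)
      rw [neg_div]
      linarith
  -- lower bound for deriv a on (c, t₂]
  set B := (deriv a t₂)⁻¹ + (t₂ - c) * M with hB
  have hBpos : 0 < B := by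
    rw [hB]
    have h1' : 0 < (deriv a t₂)⁻¹ := inv_pos.2 ht₂pos
    have h2' : 0 ≤ (t₂ - c) * M := mul_nonneg (by linarith) hMpos.le
    linarith
  have hlb : ∀ t ∈ Ioc c t₂, B⁻¹ ≤ deriv a t := by
    intro t ht
    have hwt : w t ≤ w t₂ := hwmono ht (right_mem_Ioc.2 hct₂) ht.2
    have hinv : (deriv a t)⁻¹ ≤ B := by
      have : t * M ≥ c * M := by
        exact mul_le_mul_of_nonneg_right ht.1.le hMpos.le
      simp only [hw, hB] at hwt ⊢
      nlinarith [ht.1, ht.2, hMpos]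
    calc B⁻¹ ≤ ((deriv a t)⁻¹)⁻¹ := by
          apply inv_anti₀ (inv_pos.2 (hupos' t ht)) hinv
      _ = deriv a t := inv_inv _
  -- contradiction with continuity at c
  have hcc : ContinuousAt (deriv a) c :=
    (ang_ucont hsmooth).continuousAt (isOpen_Ioi.mem_nhds hcpos)
  have hev : ∀ᶠ t in 𝓝 c, deriv a t < B⁻¹ := by
    have : Tendsto (deriv a) (𝓝 c) (𝓝 0) := by rw [← hc0]; exact hcc
    exact this.eventually_lt_const (inv_pos.2 hBpos)
  have hev' : ∀ᶠ t in 𝓝[>] c, deriv a t < B⁻¹ :=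
    eventually_nhdsWithin_of_eventually_nhds hev
  have hev2 : ∀ᶠ t in 𝓝[>] c, t ∈ Ioc c t₂ :=
    Ioc_mem_nhdsGT hct₂
  obtain ⟨t, h1', h2'⟩ := (hev'.and hev2).exists
  exact absurd (hlb t h2') (not_le.2 h1')


lemma ang_a_tendsto (ha0 : a 0 = 0) (hcont : ContinuousOn a (Set.Ici 0)) :
    Tendsto a (𝓝[>] (0:ℝ)) (𝓝 0) := by
  have h := (hcont 0 (mem_Ici.2 (le_refl 0))).tendsto
  rw [ha0] at h
  exact h.mono_left (nhdsWithin_mono _ (fun x (hx : x ∈ Ioi (0:ℝ)) => mem_Ici.2 (le_of_lt hx)))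

lemma ang_a_tendsto' (ha0 : a 0 = 0) (hmono : StrictMonoOn a (Set.Ici 0))
    (hcont : ContinuousOn a (Set.Ici 0)) :
    Tendsto a (𝓝[>] (0:ℝ)) (𝓝[>] 0) := by
  rw [tendsto_nhdsWithin_iff]
  refine ⟨ang_a_tendsto ha0 hcont, ?_⟩
  filter_upwards [self_mem_nhdsWithin] with t ht
  exact ang_apos ha0 hmono t ht

lemma ang_ratio_mono (ha0 : a 0 = 0) (hmono : StrictMonoOn a (Set.Ici 0))
    (hcont : ContinuousOn a (Set.Ici 0)) (hsmooth : ContDiffOn ℝ 2 a (Set.Ioi 0))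
    (hreg : ∀ t > (0:ℝ), a t * deriv (deriv a) t / (deriv a t) ^ 2 ≤ 1) :
    MonotoneOn (fun t => a t / deriv a t) (Set.Ioi 0) := by
  have hup := ang_upos ha0 hmono hcont hsmooth hreg
  apply monotoneOn_of_deriv_nonneg (convex_Ioi 0)
  · exact ((hcont.mono (fun x (hx : x ∈ Ioi (0:ℝ)) => mem_Ici.2 (le_of_lt hx))).div (ang_ucont hsmooth)
      (fun x hx => (hup x hx).ne'))
  · rw [interior_Ioi]
    intro x hx
    exact (((ang_adiff hsmooth x hx).hasDerivAt.div
      (ang_udiff hsmooth x hx).hasDerivAt (hup x hx).ne')).differentiableAt.differentiableWithinAt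
  · rw [interior_Ioi]
    intro x hx
    have hd : HasDerivAt (fun t => a t / deriv a t)
        ((deriv a x * deriv a x - a x * deriv (deriv a) x) / (deriv a x) ^ 2) x :=
      (ang_adiff hsmooth x hx).hasDerivAt.div (ang_udiff hsmooth x hx).hasDerivAt (hup x hx).ne'
    rw [hd.deriv]
    have h1 : a x * deriv (deriv a) x ≤ (deriv a x) ^ 2 := by
      have := hreg x hx
      rwa [div_le_one (pow_pos (hup x hx) 2)] at this
    apply div_nonneg _ (by positivity)
    nlinarith [h1]

lemma ang_ratio_small (ha0 : a 0 = 0) (hmono : StrictMonoOn a (Set.Ici 0))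
    (hcont : ContinuousOn a (Set.Ici 0)) (hsmooth : ContDiffOn ℝ 2 a (Set.Ioi 0))
    (hreg : ∀ t > (0:ℝ), a t * deriv (deriv a) t / (deriv a t) ^ 2 ≤ 1) :
    ∀ ε > (0:ℝ), ∀ d > (0:ℝ), ∃ δ, 0 < δ ∧ δ < d ∧ a δ / deriv a δ < ε := by
  have hup := ang_upos ha0 hmono hcont hsmooth hreg
  have hap := ang_apos ha0 hmono
  intro ε hε d hd
  by_contra hcon
  push_neg at hcon
  set d' := d / 2 with hd'
  have hd'pos : 0 < d' := by positivity
  have hd'lt : d' < d := by rw [hd']; linarith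
  -- log a t is bounded below on (0, d')
  have hbound : ∀ t ∈ Ioo (0:ℝ) d', Real.log (a d') - d' / ε ≤ Real.log (a t) := by
    intro t ht
    obtain ⟨c, hcmem, hceq⟩ :
        ∃ c ∈ Ioo t d', deriv a c / a c =
          (Real.log (a d') - Real.log (a t)) / (d' - t) := by
      apply exists_hasDerivAt_eq_slope (fun s => Real.log (a s))
        (fun s => deriv a s / a s) ht.2
      · apply ContinuousOn.log (hcont.mono (fun x hx => le_trans ht.1.le hx.1))
        intro x hx
        exact (hap x (lt_of_lt_of_le ht.1 hx.1)).ne'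
      · intro x hx
        have hxpos : 0 < x := lt_trans ht.1 hx.1
        exact ((ang_adiff hsmooth x hxpos).hasDerivAt.log (hap x hxpos).ne')
    have hcpos : 0 < c := lt_trans ht.1 hcmem.1
    have hcd : c < d := lt_trans hcmem.2 hd'lt
    have hratio : ε ≤ a c / deriv a c := hcon c hcpos hcd
    have hucpos : 0 < deriv a c := hup c hcpos
    have hacpos : 0 < a c := hap c hcpos
    have hrec : deriv a c / a c ≤ 1 / ε := by
      rw [div_le_div_iff₀ hacpos hε]
      rw [le_div_iff₀ hucpos] at hratio
      linarith
    have hslope : (Real.log (a d') - Real.log (a t)) / (d' - t) ≤ 1 / ε := by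
      rw [← hceq]; exact hrec
    have hd't : 0 < d' - t := sub_pos.2 ht.2
    rw [div_le_div_iff₀ hd't hε, one_mul] at hslope
    have : (Real.log (a d') - Real.log (a t)) * ε ≤ d' := by
      nlinarith [ht.1, hd't]
    rw [sub_le_comm, le_div_iff₀ hε]
    exact this
  -- but log (a t) → -∞
  have hlogbot : Tendsto (fun t => Real.log (a t)) (𝓝[>] (0:ℝ)) atBot :=
    Real.tendsto_log_nhdsGT_zero.comp (ang_a_tendsto' ha0 hmono hcont)
  have hev : ∀ᶠ t in 𝓝[>] (0:ℝ), Real.log (a t) < Real.log (a d') - d' / ε :=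
    hlogbot.eventually_lt_atBot _
  have hev2 : ∀ᶠ t in 𝓝[>] (0:ℝ), t ∈ Ioo (0:ℝ) d' :=
    Ioo_mem_nhdsGT hd'pos
  obtain ⟨t, h1, h2⟩ := (hev.and hev2).exists
  exact absurd (hbound t h2) (not_le.2 h1)


end AngularAux

set_option maxHeartbeats 2000000 in
/-- Under the hypotheses of Corollary `anglelimit`, `a(t₀)·χ_{t₀}(τ) → 0` as `t₀ → 0⁺`,
so the angular metric coefficients vanish at the big bang when `k = 0`. -/
theorem angular_coefficient_vanishes (a : ℝ → ℝ)
    (ha0 : a 0 = 0)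
    (heven : ∀ t, a (-t) = a t)
    (hmono : StrictMonoOn a (Set.Ici 0))
    (hcont : ContinuousOn a (Set.Ici 0))
    (hsmooth : ContDiffOn ℝ 2 a (Set.Ioi 0))
    (hreg : ∀ t > (0:ℝ), a t * deriv (deriv a) t / (deriv a t) ^ 2 ≤ 1)
    (hcase :
      (∃ L : ℝ, 0 < L ∧
        Filter.Tendsto (deriv a) (nhdsWithin 0 (Set.Ioi 0)) (nhds L)) ∨
      (Filter.Tendsto (deriv a) (nhdsWithin 0 (Set.Ioi 0)) (nhds 0) ∧
        ∃ n : ℕ, iteratedDeriv n a 0 ≠ 0)) :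
    ∀ τ > (0:ℝ),
      Filter.Tendsto
        (fun t₀ => a t₀ * ∫ t in t₀..τ,
          (1 / a t) * (a τ / Real.sqrt ((a τ) ^ 2 - (a t) ^ 2)))
        (nhdsWithin 0 (Set.Ioi 0)) (nhds 0) := by
  intro τ hτ
  have hap := ang_apos ha0 hmono
  have hup := ang_upos ha0 hmono hcont hsmooth hreg
  have hacont : ∀ s₁ s₂ : ℝ, 0 < s₁ → ContinuousOn a (Icc s₁ s₂) := fun s₁ s₂ h =>
    hcont.mono (fun x hx => le_trans h.le hx.1)
  -- basic constants
  set A := a τ with hA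
  have hApos : 0 < A := hap τ hτ
  have hτ2 : (0:ℝ) < τ / 2 := by linarith
  set hh := a (τ / 2) with hhh
  have hhpos : 0 < hh := hap _ hτ2
  have hhA : hh < A := hmono (mem_Ici.2 hτ2.le) (mem_Ici.2 hτ.le) (by linarith)
  set cc := Real.sqrt (A ^ 2 - hh ^ 2) with hcc
  have hccpos : 0 < cc := Real.sqrt_pos.2 (by nlinarith)
  set C1 := A / cc with hC1
  have hC1pos : 0 < C1 := div_pos hApos hccpos
  -- minimum of deriv a on [τ/2, τ]
  obtain ⟨ξ, hξmem, hξmin⟩ :=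
    isCompact_Icc.exists_isMinOn (nonempty_Icc.2 (by linarith : τ / 2 ≤ τ))
      ((ang_ucont hsmooth).mono (fun x hx => lt_of_lt_of_le hτ2 hx.1))
  set m := deriv a ξ with hm
  have hmpos : 0 < m := hup ξ (lt_of_lt_of_le hτ2 hξmem.1)
  have hmmin : ∀ t ∈ Icc (τ/2) τ, m ≤ deriv a t := fun t ht => hξmin ht
  -- MVT lower bound near τ
  have hMVT : ∀ t ∈ Ico (τ/2) τ, m * (τ - t) ≤ A - a t := by
    intro t ht
    obtain ⟨c', hc'mem, hc'eq⟩ :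
        ∃ c' ∈ Ioo t τ, deriv a c' = (a τ - a t) / (τ - t) :=
      exists_hasDerivAt_eq_slope a (deriv a) ht.2
        (hacont t τ (lt_of_lt_of_le hτ2 ht.1))
        (fun x hx => (ang_adiff hsmooth x (lt_trans (lt_of_lt_of_le hτ2 ht.1) hx.1)).hasDerivAt)
    have hmc : m ≤ deriv a c' := hmmin c' ⟨le_trans ht.1 hc'mem.1.le, hc'mem.2.le⟩
    rw [hc'eq, le_div_iff₀ (by linarith [hc'mem.2, ht.2] : (0:ℝ) < τ - t)] at hmc
    linarith [hmc]
  set D := A / (hh * Real.sqrt (m * A)) with hD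
  have hDpos : 0 < D := div_pos hApos (mul_pos hhpos (Real.sqrt_pos.2 (by positivity)))
  set K2 := 2 * τ ^ ((1:ℝ)/2) with hK2
  have hK2pos : 0 < K2 := by positivity
  -- the dominating function
  set g : ℝ → ℝ := fun t => C1 * (a t)⁻¹ + D * (τ - t) ^ (-(1:ℝ)/2) with hg
  rw [NormedAddCommGroup.tendsto_nhds_zero]
  intro ε hε
  set ε' := ε / 3 with hε'
  have hε'pos : 0 < ε' := by positivity
  -- choose δ
  obtain ⟨δ, hδpos, hδlt, hδratio⟩ :=
    ang_ratio_small ha0 hmono hcont hsmooth hreg (ε' / C1) (by positivity) (τ/2) hτ2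
  have hδτ : δ < τ := by linarith
  set uδ := deriv a δ with huδ
  have huδpos : 0 < uδ := hup δ hδpos
  have haδpos : 0 < a δ := hap δ hδpos
  set εA := ε' / (C1 * (τ / a δ) + D * K2 + 1) with hεA
  have hεApos : 0 < εA := by positivity
  filter_upwards [Ioo_mem_nhdsGT hδpos,
    (ang_a_tendsto ha0 hcont).eventually_lt_const hεApos] with t₀ ht₀ hat₀
  obtain ⟨ht₀pos, ht₀δ⟩ := ht₀
  have ht₀τ2 : t₀ < τ / 2 := lt_trans ht₀δ hδlt
  have ht₀τ : t₀ < τ := by linarith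
  have hat₀pos : 0 < a t₀ := hap t₀ ht₀pos
  set f : ℝ → ℝ := fun t => (1 / a t) * (A / Real.sqrt (A ^ 2 - (a t) ^ 2)) with hf
  -- nonnegativity of f on [t₀, τ]
  have hfnn : ∀ t, t₀ ≤ t → 0 ≤ f t := by
    intro t ht
    have : 0 < a t := hap t (lt_of_lt_of_le ht₀pos ht)
    have h1 : 0 ≤ 1 / a t := by positivity
    have h2 : 0 ≤ A / Real.sqrt (A ^ 2 - a t ^ 2) := div_nonneg hApos.le (Real.sqrt_nonneg _)
    exact mul_nonneg h1 h2
  -- integrability of pieces of g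
  have hainv_int : ∀ s₁ s₂ : ℝ, 0 < s₁ → s₁ ≤ s₂ →
      IntervalIntegrable (fun t => (a t)⁻¹) volume s₁ s₂ := by
    intro s₁ s₂ hs₁ hs₁₂
    apply ContinuousOn.intervalIntegrable
    rw [uIcc_of_le hs₁₂]
    exact (hacont s₁ s₂ hs₁).inv₀ (fun x hx => (hap x (lt_of_lt_of_le hs₁ hx.1)).ne')
  have hrpow_int : IntervalIntegrable (fun t => (τ - t) ^ (-(1:ℝ)/2)) volume t₀ τ := by
    have h0 : IntervalIntegrable (fun x : ℝ => x ^ (-(1:ℝ)/2)) volume (τ - τ) (τ - t₀) :=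
      intervalIntegrable_rpow' (by norm_num)
    simpa using (h0.comp_sub_left τ).symm
  have hg_int : IntervalIntegrable g volume t₀ τ :=
    ((hainv_int t₀ τ ht₀pos ht₀τ.le).const_mul C1).add (hrpow_int.const_mul D)
  -- pointwise domination on Ioc t₀ τ
  have hdom : ∀ t ∈ Ioc t₀ τ, f t ≤ g t := by
    intro t ht
    have htpos : 0 < t := lt_trans ht₀pos ht.1
    have hat : 0 < a t := hap t htpos
    have hgnn' : 0 ≤ D * (τ - t) ^ (-(1:ℝ)/2) :=
      mul_nonneg hDpos.le (Real.rpow_nonneg (by linarith [ht.2] : (0:ℝ) ≤ τ - t) _)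
    have hC1nn' : 0 ≤ C1 * (a t)⁻¹ := mul_nonneg hC1pos.le (inv_nonneg.2 hat.le)
    rcases eq_or_lt_of_le ht.2 with heq | hlt
    · -- t = τ : f t = 0
      have : f t = 0 := by
        rw [hf]
        simp only [heq, ← hA, sub_self, Real.sqrt_zero, div_zero, mul_zero]
      rw [this, hg]
      exact add_nonneg hC1nn' hgnn'
    · have hatA : a t < A := hmono (mem_Ici.2 htpos.le) (mem_Ici.2 hτ.le) hlt
      have hargpos : 0 < A ^ 2 - a t ^ 2 := by nlinarith
      rcases le_or_gt t (τ/2) with htle | htgt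
      · -- left regime
        have h1 : a t ≤ hh := hmono.monotoneOn (mem_Ici.2 htpos.le) (mem_Ici.2 hτ2.le) htle
        have h2 : cc ≤ Real.sqrt (A ^ 2 - a t ^ 2) := by
          rw [hcc]
          exact Real.sqrt_le_sqrt (by nlinarith)
        have h3 : f t ≤ (1 / a t) * (A / cc) := by
          apply mul_le_mul_of_nonneg_left _ (by positivity)
          exact div_le_div_of_nonneg_left hApos.le hccpos h2
        have h4 : (1 / a t) * (A / cc) = C1 * (a t)⁻¹ := by
          rw [hC1]; field_simp
        rw [hg]
        calc f t ≤ C1 * (a t)⁻¹ := by rw [← h4]; exact h3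
          _ ≤ C1 * (a t)⁻¹ + D * (τ - t) ^ (-(1:ℝ)/2) := le_add_of_nonneg_right hgnn'
      · -- right regime
        have hmvt := hMVT t ⟨htgt.le, hlt⟩
        have hτt : (0:ℝ) < τ - t := by linarith
        have hprod : m * A * (τ - t) ≤ A ^ 2 - a t ^ 2 := by
          nlinarith [mul_le_mul_of_nonneg_right hmvt (by linarith : (0:ℝ) ≤ A + a t),
            mul_nonneg (mul_nonneg hmpos.le hτt.le) hat.le]
        have hsq : Real.sqrt (m * A) * Real.sqrt (τ - t) ≤ Real.sqrt (A ^ 2 - a t ^ 2) := by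
          rw [← Real.sqrt_mul (by positivity : (0:ℝ) ≤ m * A)]
          exact Real.sqrt_le_sqrt (by nlinarith)
        have hsqpos : 0 < Real.sqrt (m * A) * Real.sqrt (τ - t) :=
          mul_pos (Real.sqrt_pos.2 (by positivity)) (Real.sqrt_pos.2 hτt)
        have hhat : hh ≤ a t := hmono.monotoneOn (mem_Ici.2 hτ2.le) (mem_Ici.2 htpos.le) htgt.le
        have h3 : f t ≤ (1 / hh) * (A / (Real.sqrt (m * A) * Real.sqrt (τ - t))) := by
          apply mul_le_mul
          · exact one_div_le_one_div_of_le hhpos hhat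
          · exact div_le_div_of_nonneg_left hApos.le hsqpos hsq
          · exact div_nonneg hApos.le (Real.sqrt_nonneg _)
          · positivity
        have hrw : (τ - t) ^ (-(1:ℝ)/2) = (Real.sqrt (τ - t))⁻¹ := by
          rw [Real.sqrt_eq_rpow, ← Real.rpow_neg hτt.le]
          norm_num
        have h4 : (1 / hh) * (A / (Real.sqrt (m * A) * Real.sqrt (τ - t)))
            = D * (τ - t) ^ (-(1:ℝ)/2) := by
          rw [hrw, hD]
          have hs1 : Real.sqrt (m * A) ≠ 0 := (Real.sqrt_pos.2 (by positivity)).ne'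
          have hs2 : Real.sqrt (τ - t) ≠ 0 := (Real.sqrt_pos.2 hτt).ne'
          field_simp
        rw [hg]
        calc f t ≤ D * (τ - t) ^ (-(1:ℝ)/2) := by rw [← h4]; exact h3
          _ ≤ C1 * (a t)⁻¹ + D * (τ - t) ^ (-(1:ℝ)/2) := le_add_of_nonneg_left hC1nn'
  -- integral comparison
  have hIle : (∫ t in t₀..τ, f t) ≤ ∫ t in t₀..τ, g t := by
    rw [intervalIntegral.integral_of_le ht₀τ.le, intervalIntegral.integral_of_le ht₀τ.le]
    apply MeasureTheory.integral_mono_of_nonneg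
    · rw [EventuallyLE, ae_restrict_iff' measurableSet_Ioc]
      exact Eventually.of_forall (fun t ht => hfnn t ht.1.le)
    · exact (intervalIntegrable_iff_integrableOn_Ioc_of_le ht₀τ.le).1 hg_int
    · rw [EventuallyLE, ae_restrict_iff' measurableSet_Ioc]
      exact Eventually.of_forall hdom
  -- evaluate/bound ∫ g
  have hgval : (∫ t in t₀..τ, g t) =
      C1 * (∫ t in t₀..τ, (a t)⁻¹) + D * ∫ t in t₀..τ, (τ - t) ^ (-(1:ℝ)/2) := by
    rw [intervalIntegral.integral_add ((hainv_int t₀ τ ht₀pos ht₀τ.le).const_mul C1)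
      (hrpow_int.const_mul D), intervalIntegral.integral_const_mul,
      intervalIntegral.integral_const_mul]
  have hrpow_val : (∫ t in t₀..τ, (τ - t) ^ (-(1:ℝ)/2)) ≤ K2 := by
    rw [intervalIntegral.integral_comp_sub_left (fun x => x ^ (-(1:ℝ)/2)) τ, sub_self]
    rw [integral_rpow (Or.inl (by norm_num))]
    have h1 : (-(1:ℝ)/2 + 1) = 1/2 := by norm_num
    rw [h1]
    have h2 : (0:ℝ) ^ ((1:ℝ)/2) = 0 := by
      rw [Real.zero_rpow (by norm_num)]
    rw [h2, sub_zero, hK2]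
    have h3 : (τ - t₀) ^ ((1:ℝ)/2) ≤ τ ^ ((1:ℝ)/2) :=
      Real.rpow_le_rpow (by linarith) (by linarith) (by norm_num)
    rw [div_le_iff₀ (by norm_num : (0:ℝ) < 1/2)]
    linarith
  -- bound on ∫ 1/a
  have hJ : a t₀ * (∫ t in t₀..τ, (a t)⁻¹) ≤ a δ / uδ + a t₀ * (τ / a δ) := by
    have hint1 := hainv_int t₀ δ ht₀pos ht₀δ.le
    have hint2 := hainv_int δ τ hδpos hδτ.le
    have hsplit : (∫ t in t₀..τ, (a t)⁻¹)
        = (∫ t in t₀..δ, (a t)⁻¹) + ∫ t in δ..τ, (a t)⁻¹ :=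
      (intervalIntegral.integral_add_adjacent_intervals hint1 hint2).symm
    -- bound on the middle piece [δ, τ]
    have hmid : (∫ t in δ..τ, (a t)⁻¹) ≤ (τ - δ) * (a δ)⁻¹ := by
      have := intervalIntegral.integral_mono_on hδτ.le hint2
        (_root_.intervalIntegrable_const (c := (a δ)⁻¹))
        (fun t ht => _root_.inv_anti₀ haδpos
          (hmono.monotoneOn (mem_Ici.2 hδpos.le) (mem_Ici.2 (lt_of_lt_of_le hδpos ht.1).le) ht.1))
      simpa [intervalIntegral.integral_const, smul_eq_mul] using this
    -- bound on the first piece [t₀, δ] via the ratio function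
    have hder_int : IntervalIntegrable (fun t => deriv a t / (a t) ^ 2) volume t₀ δ := by
      apply ContinuousOn.intervalIntegrable
      rw [uIcc_of_le ht₀δ.le]
      apply ContinuousOn.div
      · exact (ang_ucont hsmooth).mono (fun x hx => lt_of_lt_of_le ht₀pos hx.1)
      · exact (hacont t₀ δ ht₀pos).pow 2
      · intro x hx
        exact pow_ne_zero 2 (hap x (lt_of_lt_of_le ht₀pos hx.1)).ne'
    have hftc : (∫ t in t₀..δ, deriv a t / (a t) ^ 2) = (a t₀)⁻¹ - (a δ)⁻¹ := by
      have : (∫ t in t₀..δ, deriv a t / (a t) ^ 2)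
          = (fun t => -(a t)⁻¹) δ - (fun t => -(a t)⁻¹) t₀ := by
        apply intervalIntegral.integral_eq_sub_of_hasDerivAt _ hder_int
        intro t ht
        rw [uIcc_of_le ht₀δ.le] at ht
        have htpos : 0 < t := lt_of_lt_of_le ht₀pos ht.1
        have hd := (ang_adiff hsmooth t htpos).hasDerivAt
        have := (hd.inv (hap t htpos).ne').neg
        convert this using 1
        · rfl
        · ring
      rw [this]; ring
    have hfirst : (∫ t in t₀..δ, (a t)⁻¹)
        ≤ (a δ / uδ) * ((a t₀)⁻¹ - (a δ)⁻¹) := by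
      have hmono_int := intervalIntegral.integral_mono_on ht₀δ.le hint1
        (hder_int.const_mul (a δ / uδ)) ?_
      · rwa [intervalIntegral.integral_const_mul, hftc] at hmono_int
      · intro t ht
        have htpos : 0 < t := lt_of_lt_of_le ht₀pos ht.1
        have hut : 0 < deriv a t := hup t htpos
        have hat : 0 < a t := hap t htpos
        have hratio : a t / deriv a t ≤ a δ / uδ :=
          ang_ratio_mono ha0 hmono hcont hsmooth hreg (mem_Ioi.2 htpos) (mem_Ioi.2 hδpos) ht.2
        have heq : (a t)⁻¹ = (a t / deriv a t) * (deriv a t / (a t) ^ 2) := by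
          field_simp
        rw [heq]
        exact mul_le_mul_of_nonneg_right hratio (div_nonneg hut.le (sq_nonneg _))
    have hfirst' : a t₀ * (∫ t in t₀..δ, (a t)⁻¹) ≤ a δ / uδ := by
      have h1 : (a δ / uδ) * ((a t₀)⁻¹ - (a δ)⁻¹) ≤ (a δ / uδ) * (a t₀)⁻¹ := by
        apply mul_le_mul_of_nonneg_left _ (div_nonneg haδpos.le huδpos.le)
        have : 0 < (a δ)⁻¹ := inv_pos.2 haδpos
        linarith
      have h2 : a t₀ * (∫ t in t₀..δ, (a t)⁻¹) ≤ a t₀ * ((a δ / uδ) * (a t₀)⁻¹) :=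
        mul_le_mul_of_nonneg_left (le_trans hfirst h1) hat₀pos.le
      have h3 : a t₀ * ((a δ / uδ) * (a t₀)⁻¹) = a δ / uδ := by
        field_simp
      linarith
    have hmid' : a t₀ * (∫ t in δ..τ, (a t)⁻¹) ≤ a t₀ * (τ / a δ) := by
      apply mul_le_mul_of_nonneg_left _ hat₀pos.le
      calc (∫ t in δ..τ, (a t)⁻¹) ≤ (τ - δ) * (a δ)⁻¹ := hmid
        _ ≤ τ * (a δ)⁻¹ := by
            apply mul_le_mul_of_nonneg_right (by linarith) (inv_nonneg.2 haδpos.le)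
        _ = τ / a δ := by rw [div_eq_mul_inv]
    calc a t₀ * (∫ t in t₀..τ, (a t)⁻¹)
        = a t₀ * (∫ t in t₀..δ, (a t)⁻¹) + a t₀ * (∫ t in δ..τ, (a t)⁻¹) := by
          rw [hsplit]; ring
      _ ≤ a δ / uδ + a t₀ * (τ / a δ) := add_le_add hfirst' hmid'
  -- put everything together
  have hInn : 0 ≤ ∫ t in t₀..τ, f t :=
    intervalIntegral.integral_nonneg ht₀τ.le (fun t ht => hfnn t ht.1)
  have hgnn : 0 ≤ ∫ t in t₀..τ, g t := le_trans hInn hIle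
  have key : a t₀ * ∫ t in t₀..τ, f t ≤
      C1 * (a δ / uδ) + a t₀ * (C1 * (τ / a δ) + D * K2) := by
    calc a t₀ * ∫ t in t₀..τ, f t
        ≤ a t₀ * ∫ t in t₀..τ, g t := by
          exact mul_le_mul_of_nonneg_left hIle hat₀pos.le
      _ = C1 * (a t₀ * ∫ t in t₀..τ, (a t)⁻¹)
            + a t₀ * (D * ∫ t in t₀..τ, (τ - t) ^ (-(1:ℝ)/2)) := by
          rw [hgval]; ring
      _ ≤ C1 * (a δ / uδ + a t₀ * (τ / a δ)) + a t₀ * (D * K2) := by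
          apply add_le_add
          · exact mul_le_mul_of_nonneg_left hJ hC1pos.le
          · apply mul_le_mul_of_nonneg_left _ hat₀pos.le
            exact mul_le_mul_of_nonneg_left hrpow_val hDpos.le
      _ = C1 * (a δ / uδ) + a t₀ * (C1 * (τ / a δ) + D * K2) := by ring
  have hbound1 : C1 * (a δ / uδ) < ε' := by
    rw [← lt_div_iff₀' hC1pos]
    exact hδratio
  have hbound2 : a t₀ * (C1 * (τ / a δ) + D * K2) < ε' := by
    have hXnn : 0 ≤ C1 * (τ / a δ) + D * K2 :=
      add_nonneg (mul_nonneg hC1pos.le (div_nonneg hτ.le haδpos.le))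
        (mul_nonneg hDpos.le hK2pos.le)
    calc a t₀ * (C1 * (τ / a δ) + D * K2)
        ≤ a t₀ * (C1 * (τ / a δ) + D * K2 + 1) :=
          mul_le_mul_of_nonneg_left (by linarith) hat₀pos.le
      _ < εA * (C1 * (τ / a δ) + D * K2 + 1) :=
          mul_lt_mul_of_pos_right hat₀ (by linarith)
      _ = ε' := by
          rw [hεA, div_mul_cancel₀]
          linarith
  have hFnn : 0 ≤ a t₀ * ∫ t in t₀..τ, f t := mul_nonneg hat₀pos.le hInn
  have : a t₀ * (∫ t in t₀..τ, f t) < ε := by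
    have : ε' + ε' < ε := by rw [hε']; linarith
    linarith [key, hbound1, hbound2]
  rw [Real.norm_eq_abs, abs_of_nonneg hFnn]
  exact this
end

section
/- For the power law scale factor a(t) = t^α with α > 0, the Fermi radius satisfies ρ_{M_τ} = C_α·τ where C_α = √π·Γ((1+α)/(2α)) / Γ(1/(2α)); i.e. ∫_0^τ t^α/√(τ^{2α} − t^{2α}) dt = τ·√π·Γ((1+α)/(2α))/Γ(1/(2α)). -/
open MeasureTheory intervalIntegral Set

/-- The real Beta integral. -/
lemma real_beta_aux (p q : ℝ) (hp : 0 < p) (hq : 0 < q) :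
    ∫ x in (0:ℝ)..1, x ^ (p-1) * (1-x) ^ (q-1) =
      Real.Gamma p * Real.Gamma q / Real.Gamma (p+q) := by
  have h := Complex.Gamma_mul_Gamma_eq_betaIntegral (s := p) (t := q)
    (by simpa using hp) (by simpa using hq)
  have hbeta : Complex.betaIntegral p q =
      ((∫ x in (0:ℝ)..1, x ^ (p-1) * (1-x) ^ (q-1) : ℝ) : ℂ) := by
    rw [Complex.betaIntegral, ← intervalIntegral.integral_ofReal]
    apply intervalIntegral.integral_congr
    intro x hx
    rw [Set.uIcc_of_le (by norm_num : (0:ℝ) ≤ 1)] at hx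
    have hx0 : (0:ℝ) ≤ x := hx.1
    have hx1 : (0:ℝ) ≤ 1 - x := by linarith [hx.2]
    simp only [Complex.ofReal_mul]
    rw [Complex.ofReal_cpow hx0, Complex.ofReal_cpow hx1]
    push_cast
    ring
  rw [hbeta, Complex.Gamma_ofReal, Complex.Gamma_ofReal, ← Complex.ofReal_add,
    Complex.Gamma_ofReal, ← Complex.ofReal_mul, ← Complex.ofReal_mul,
    Complex.ofReal_inj] at h
  have hne : Real.Gamma (p+q) ≠ 0 := (Real.Gamma_pos_of_pos (by linarith)).ne'
  field_simp [h]
  rw [h]; ring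

/-- For the power law scale factor `a t = t ^ α`, the Fermi radius is
`ρ_{M_τ} = C_α · τ` with `C_α = √π · Γ((1+α)/(2α)) / Γ(1/(2α))`. -/
theorem power_law_fermi_radius (α : ℝ) (hα : 0 < α) (τ : ℝ) (hτ : 0 < τ) :
    (∫ t in (0:ℝ)..τ, t ^ α / Real.sqrt (τ ^ (2 * α) - t ^ (2 * α))) =
      τ * Real.sqrt Real.pi * Real.Gamma ((1 + α) / (2 * α)) /
        Real.Gamma (1 / (2 * α)) := by
  set p : ℝ := (1+α)/(2*α) with hp
  have h2α : (0:ℝ) < 2*α := by linarith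
  have hppos : 0 < p := by rw [hp]; positivity
  set f : ℝ → ℝ := fun t => (t/τ) ^ (2*α) with hf
  set f' : ℝ → ℝ := fun t => 2*α * (t/τ) ^ (2*α-1) * (1/τ) with hf'
  set g : ℝ → ℝ := fun x => (τ/(2*α)) * (x ^ (p-1) * (1-x) ^ ((1:ℝ)/2-1)) with hg
  -- derivative
  have hderiv : ∀ t ∈ Ioo (0:ℝ) τ, HasDerivWithinAt f (f' t) (Ioo 0 τ) t := by
    intro t ht
    have h1 : HasDerivAt (fun u : ℝ => u / τ) (1/τ) t := by
      simpa using (hasDerivAt_id t).div_const τ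
    have h2 : HasDerivAt (fun u : ℝ => u ^ (2*α)) ((2*α) * (t/τ) ^ (2*α-1)) (t/τ) :=
      Real.hasDerivAt_rpow_const (Or.inl (div_pos ht.1 hτ).ne')
    exact ((h2.comp t h1)).hasDerivWithinAt
  -- injectivity
  have hinj : InjOn f (Ioo 0 τ) := by
    intro a ha b hb hab
    have h1 : ((a/τ) ^ (2*α)) ^ (1/(2*α)) = ((b/τ) ^ (2*α)) ^ (1/(2*α)) :=
      congrArg (fun y => y ^ (1/(2*α))) hab
    rw [← Real.rpow_mul (div_pos ha.1 hτ).le, ← Real.rpow_mul (div_pos hb.1 hτ).le,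
      mul_one_div_cancel h2α.ne', Real.rpow_one, Real.rpow_one] at h1
    field_simp at h1
    exact h1
  -- image
  have himg : f '' Ioo 0 τ = Ioo 0 1 := by
    ext y
    constructor
    · rintro ⟨t, ht, rfl⟩
      have hs : t/τ ∈ Ioo (0:ℝ) 1 := ⟨div_pos ht.1 hτ, (div_lt_one hτ).2 ht.2⟩
      exact ⟨Real.rpow_pos_of_pos hs.1 _, Real.rpow_lt_one hs.1.le hs.2 h2α⟩
    · intro hy
      refine ⟨τ * y ^ (1/(2*α)), ⟨by have := hy.1; positivity, ?_⟩, ?_⟩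
      · nth_rewrite 2 [show τ = τ * 1 by ring]
        exact mul_lt_mul_of_pos_left
          (Real.rpow_lt_one hy.1.le hy.2 (by positivity : (0:ℝ) < 1/(2*α))) hτ
      · simp only [hf]
        rw [mul_div_cancel_left₀ _ hτ.ne', ← Real.rpow_mul hy.1.le,
          one_div_mul_cancel h2α.ne', Real.rpow_one]
  -- pointwise equality of integrands on Ioo 0 τ
  have hpt : ∀ t ∈ Ioo (0:ℝ) τ,
      t ^ α / Real.sqrt (τ ^ (2*α) - t ^ (2*α)) = |f' t| • g (f t) := by
    intro t ht
    have hs0 : 0 < t/τ := div_pos ht.1 hτ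
    have hs1 : t/τ < 1 := (div_lt_one hτ).2 ht.2
    have hD : 0 < 1 - (t/τ) ^ (2*α) := by
      have := Real.rpow_lt_one hs0.le hs1 h2α
      linarith
    have hsqrtD : 0 < Real.sqrt (1 - (t/τ) ^ (2*α)) := Real.sqrt_pos.2 hD
    have hA : ((t/τ) ^ (2*α)) ^ (p-1) = (t/τ) ^ (1-α) := by
      rw [← Real.rpow_mul hs0.le]
      congr 1
      rw [hp]; field_simp; ring
    have hB : (1 - (t/τ) ^ (2*α)) ^ ((1:ℝ)/2-1)
        = 1 / Real.sqrt (1 - (t/τ) ^ (2*α)) := by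
      rw [show ((1:ℝ)/2-1) = -(1/2) by norm_num, Real.rpow_neg hD.le,
        Real.sqrt_eq_rpow]
      exact (one_div _).symm
    have hC : τ ^ (2*α) - t ^ (2*α) = τ ^ (2*α) * (1 - (t/τ) ^ (2*α)) := by
      rw [Real.div_rpow ht.1.le hτ.le]
      have : τ ^ (2*α) ≠ 0 := (Real.rpow_pos_of_pos hτ _).ne'
      field_simp
    have hsqrtτ : Real.sqrt (τ ^ (2*α)) = τ ^ α := by
      rw [show (2*α) = α*2 by ring, Real.rpow_mul hτ.le,
        show ((2:ℝ)) = ((2:ℕ):ℝ) by norm_num, Real.rpow_natCast,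
        Real.sqrt_sq (Real.rpow_nonneg hτ.le _)]
    have htα : t ^ α = τ ^ α * (t/τ) ^ α := by
      rw [← Real.mul_rpow hτ.le hs0.le, show τ * (t/τ) = t by field_simp]
    have hcomb : (t/τ) ^ (2*α-1) * (t/τ) ^ (1-α) = (t/τ) ^ α := by
      rw [← Real.rpow_add hs0]
      congr 1; ring
    have hfpos : 0 < f' t := by
      simp only [hf']
      have := Real.rpow_pos_of_pos hs0 (2*α-1)
      positivity
    rw [smul_eq_mul, abs_of_pos hfpos]
    simp only [hf', hg, hf]
    rw [hA, hB, hC, Real.sqrt_mul (Real.rpow_nonneg hτ.le _), hsqrtτ, htα]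
    have hτα : (0:ℝ) < τ ^ α := Real.rpow_pos_of_pos hτ _
    field_simp
    rw [← hcomb]
  -- main chain
  have hGpos : 0 < Real.Gamma (1/(2*α)) := Real.Gamma_pos_of_pos (by positivity)
  calc (∫ t in (0:ℝ)..τ, t ^ α / Real.sqrt (τ ^ (2*α) - t ^ (2*α)))
      = ∫ t in Ioo (0:ℝ) τ, t ^ α / Real.sqrt (τ ^ (2*α) - t ^ (2*α)) := by
        rw [intervalIntegral.integral_of_le hτ.le, integral_Ioc_eq_integral_Ioo]
    _ = ∫ t in Ioo (0:ℝ) τ, |f' t| • g (f t) :=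
        setIntegral_congr_fun measurableSet_Ioo hpt
    _ = ∫ x in f '' Ioo (0:ℝ) τ, g x :=
        (integral_image_eq_integral_abs_deriv_smul measurableSet_Ioo hderiv hinj g).symm
    _ = ∫ x in Ioo (0:ℝ) 1, g x := by rw [himg]
    _ = ∫ x in (0:ℝ)..1, g x := by
        rw [intervalIntegral.integral_of_le zero_le_one, integral_Ioc_eq_integral_Ioo]
    _ = (τ/(2*α)) * ∫ x in (0:ℝ)..1, x ^ (p-1) * (1-x) ^ ((1:ℝ)/2-1) := by
        simp only [hg]
        rw [intervalIntegral.integral_const_mul]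
    _ = (τ/(2*α)) * (Real.Gamma p * Real.Gamma (1/2) / Real.Gamma (p + 1/2)) := by
        rw [real_beta_aux p (1/2) hppos (by norm_num)]
    _ = τ * Real.sqrt Real.pi * Real.Gamma p / Real.Gamma (1/(2*α)) := by
        rw [show p + 1/2 = 1/(2*α) + 1 by rw [hp]; field_simp; ring,
          Real.Gamma_add_one (by positivity : (1:ℝ)/(2*α) ≠ 0),
          Real.Gamma_one_half_eq]
        field_simp
end
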